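/- The adjoint operator B* = −D_y⁴ − (1/4)y D_y has the polynomial eigenfunctions ψ*_l(y) = (1/√(l!)) Σ_{j=0}^{⌊l/4⌋} (1/j!) D_y^{4j} y^l with eigenvalues λ_l = −l/4, for each integer l ≥ 0; i.e., B*ψ*_l = −(l/4)ψ*_l. -/

import Mathlib

open Finset

noncomputable def Fm (l m : ℕ) : ℝ → ℝ := fun y => (l.descFactorial m : ℝ) * y ^ (l - m)

lemma Fm_def (l m : ℕ) : Fm l m = fun y => (l.descFactorial m : ℝ) * y ^ (l - m) := rfl

lemma derivFm (l m : ℕ) : deriv (Fm l m) = Fm l (m + 1) := by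
  funext y
  rw [Fm_def, Fm_def]
  rw [deriv_const_mul_field, deriv_pow_field]
  simp only [Nat.descFactorial_succ]
  have h2 : l - (m + 1) = l - m - 1 := by omega
  rw [h2]
  push_cast
  ring

lemma iterFm (l k : ℕ) : deriv^[k] (fun z : ℝ => z ^ l) = Fm l k := by
  induction k with
  | zero => funext y; simp [Fm]
  | succ k ih =>
    calc deriv^[k + 1] (fun z : ℝ => z ^ l)
        = deriv (deriv^[k] (fun z : ℝ => z ^ l)) := Function.iterate_succ_apply' _ _ _
      _ = Fm l (k + 1) := by rw [ih, derivFm]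

lemma diffFm (l m : ℕ) (b : ℝ) (y : ℝ) :
    DifferentiableAt ℝ (fun y : ℝ => b * Fm l m y) y := by
  simp only [Fm]
  exact (((differentiableAt_pow _).const_mul _).const_mul _)

noncomputable def Gk (l : ℕ) (c : ℝ) (k : ℕ) : ℝ → ℝ := fun y =>
  ∑ j ∈ Finset.range (l / 4 + 1), (c * (1 / (j.factorial : ℝ))) * Fm l (4 * j + k) y

lemma derivG (l : ℕ) (c : ℝ) (k : ℕ) : deriv (Gk l c k) = Gk l c (k + 1) := by
  funext y
  show deriv (fun y => ∑ j ∈ Finset.range (l / 4 + 1),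
      (c * (1 / (j.factorial : ℝ))) * Fm l (4 * j + k) y) y
    = ∑ j ∈ Finset.range (l / 4 + 1), (c * (1 / (j.factorial : ℝ))) * Fm l (4 * j + (k + 1)) y
  rw [deriv_fun_sum (fun j _ => diffFm l _ _ y)]
  refine Finset.sum_congr rfl fun j _ => ?_
  rw [deriv_const_mul_field, derivFm, Nat.add_assoc]

lemma lemC (l m : ℕ) (y : ℝ) :
    y * Fm l (m + 1) y = ((l - m : ℕ) : ℝ) * Fm l m y := by
  simp only [Fm, Nat.descFactorial_succ]
  by_cases h : m < l
  · have h2 : l - m = (l - (m + 1)) + 1 := by omega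
    rw [h2]
    push_cast
    ring
  · have h2 : l - m = 0 := by omega
    have h3 : l.descFactorial (m + 1) = 0 :=
      Nat.descFactorial_eq_zero_iff_lt.mpr (by omega)
    simp [h2, h3]

theorem stmt12 (l : ℕ) :
    let ψ : ℝ → ℝ := fun y => (1 / Real.sqrt (Nat.factorial l)) *
      ∑ j ∈ Finset.range (l / 4 + 1),
        (1 / (Nat.factorial j : ℝ)) * deriv^[4 * j] (fun z : ℝ => z ^ l) y
    ∀ y : ℝ, -(deriv^[4] ψ y) - (1 / 4) * y * deriv ψ y = -((l : ℝ) / 4) * ψ y := by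
  intro ψ y
  set c : ℝ := 1 / Real.sqrt (Nat.factorial l) with hc
  have h0 : ψ = Gk l c 0 := by
    funext z
    show c * ∑ j ∈ Finset.range (l / 4 + 1),
        (1 / (Nat.factorial j : ℝ)) * deriv^[4 * j] (fun z : ℝ => z ^ l) z
      = ∑ j ∈ Finset.range (l / 4 + 1), (c * (1 / (j.factorial : ℝ))) * Fm l (4 * j + 0) z
    simp only [iterFm, Finset.mul_sum, Nat.add_zero, mul_assoc]
  have h1 : deriv ψ = Gk l c 1 := by rw [h0]; exact derivG l c 0
  have hit : deriv^[4] ψ = deriv (deriv (deriv (deriv ψ))) := rfl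
  have h4 : deriv^[4] ψ = Gk l c 4 := by
    rw [hit, h0, derivG, derivG, derivG, derivG]
  rw [h4, h1, h0]
  simp only [Gk]
  have hkey : ∑ j ∈ Finset.range (l / 4 + 1),
      (c * (1 / (j.factorial : ℝ))) * Fm l (4 * j + 4) y
      = ∑ j ∈ Finset.range (l / 4 + 1),
        (j : ℝ) * ((c * (1 / (j.factorial : ℝ))) * Fm l (4 * j + 0) y) := by
    rw [Finset.sum_range_succ, Finset.sum_range_succ']
    have hd : l.descFactorial (4 * (l / 4) + 4) = 0 :=
      Nat.descFactorial_eq_zero_iff_lt.mpr (by omega)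
    have hz : Fm l (4 * (l / 4) + 4) y = 0 := by
      rw [Fm_def, hd]; simp
    rw [hz]
    simp only [Nat.cast_zero, zero_mul, add_zero, mul_zero, Nat.add_zero]
    refine Finset.sum_congr rfl fun j _ => ?_
    rw [show 4 * (j + 1) = 4 * j + 4 by omega]
    have hf : ((j + 1).factorial : ℝ) = ((j : ℝ) + 1) * (j.factorial : ℝ) := by
      rw [Nat.factorial_succ]; push_cast; ring
    have hne : (j.factorial : ℝ) ≠ 0 := Nat.cast_ne_zero.mpr (Nat.factorial_ne_zero j)
    have hne2 : ((j : ℝ) + 1) ≠ 0 := by positivity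
    rw [hf]
    push_cast
    field_simp
  have hmid : (1 / 4 : ℝ) * y * (∑ j ∈ Finset.range (l / 4 + 1),
      (c * (1 / (j.factorial : ℝ))) * Fm l (4 * j + 1) y)
      = ∑ j ∈ Finset.range (l / 4 + 1),
        (1 / 4 : ℝ) * ((l : ℝ) - 4 * (j : ℝ)) *
          ((c * (1 / (j.factorial : ℝ))) * Fm l (4 * j + 0) y) := by
    rw [Finset.mul_sum]
    refine Finset.sum_congr rfl fun j hj => ?_
    have h4j : 4 * j ≤ l := by
      have := Finset.mem_range.mp hj; omega
    have hcast : ((l - 4 * j : ℕ) : ℝ) = (l : ℝ) - 4 * (j : ℝ) := by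
      rw [Nat.cast_sub h4j]; push_cast; ring
    have hC := lemC l (4 * j) y
    calc (1 / 4 : ℝ) * y * ((c * (1 / (j.factorial : ℝ))) * Fm l (4 * j + 1) y)
        = (1 / 4 : ℝ) * (c * (1 / (j.factorial : ℝ))) * (y * Fm l (4 * j + 1) y) := by ring
      _ = _ := by
          rw [hC, hcast, show 4 * j + 0 = 4 * j by omega]; ring
  rw [hkey, hmid, Finset.mul_sum, ← Finset.sum_neg_distrib, ← Finset.sum_sub_distrib]
  exact Finset.sum_congr rfl fun j _ => by ring
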